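/- Let 𝒢 be a locally κ-generated Grothendieck category and g : X → Y an epimorphism with Y κ-generated. Then there exists a κ-generated subobject X' ⊆ X such that the restriction of g to X' is still an epimorphism onto Y. -/

import Mathlib

open CategoryTheory Limits

universe v u

/-- A family of subobjects is `κ`-filtered (κ-directed): every subfamily of
cardinality `< κ` has an upper bound within the family. -/
def KappaFilteredFamily {C : Type u} [Category.{v} C] {X : C}
    (κ : Cardinal.{v}) {ι : Type v} (S : ι → Subobject X) : Prop :=
  ∀ t : Set ι, Cardinal.mk t < κ → ∃ j, ∀ i ∈ t, S i ≤ S j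

/-- An object `Y` is `κ`-generated: whenever `Y` is a `κ`-filtered union of subobjects
`Y = Σᵢ Yᵢ`, then `Y = Yᵢ` for some `i`. -/
def IsKappaGenerated {C : Type u} [Category.{v} C] [Abelian C] [HasColimits C]
    [WellPowered.{v} C] (κ : Cardinal.{v}) (Y : C) : Prop :=
  ∀ {ι : Type v} (S : ι → Subobject Y), KappaFilteredFamily κ S →
    @iSup _ _ (Subobject.completeSemilatticeSup.{v}).toSupSet S = ⊤ → ∃ i, S i = ⊤

/-- The category is locally `κ`-generated: every object is a `κ`-filtered union of
`κ`-generated subobjects. -/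
def LocallyKappaGenerated (C : Type u) [Category.{v} C] [Abelian C] [HasColimits C]
    [WellPowered.{v} C] (κ : Cardinal.{v}) : Prop :=
  ∀ X : C, ∃ (ι : Type v) (S : ι → Subobject X),
    KappaFilteredFamily κ S ∧ (∀ i, IsKappaGenerated κ ((S i : C))) ∧
      @iSup _ _ (Subobject.completeSemilatticeSup.{v}).toSupSet S = ⊤

/-- Let `𝒢` be a locally `κ`-generated Grothendieck category and
`g : X ⟶ Y` an epimorphism with `Y` κ-generated.  Then there is a κ-generated subobject
`X' ⊆ X` such that the restriction of `g` to `X'` is still an epimorphism onto `Y`. -/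
theorem stmt9 {𝒢 : Type u} [Category.{v} 𝒢] [Abelian 𝒢] [HasColimits 𝒢] [AB5 𝒢]
    [WellPowered.{v} 𝒢] (κ : Cardinal.{v}) (hκ : κ.IsRegular)
    (hloc : LocallyKappaGenerated 𝒢 κ) {X Y : 𝒢} (g : X ⟶ Y) [Epi g]
    (hY : IsKappaGenerated κ Y) :
    ∃ X' : Subobject X, IsKappaGenerated κ (X' : 𝒢) ∧ Epi (X'.arrow ≫ g) := by

  obtain ⟨ι, S, hfil, hgen, hsup⟩ := hloc X
  letI : CompleteSemilatticeSup (Subobject X) := Subobject.completeSemilatticeSup.{v}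
  letI : CompleteSemilatticeSup (Subobject Y) := Subobject.completeSemilatticeSup.{v}
  let T : ι → Subobject Y := fun i => imageSubobject ((S i).arrow ≫ g)
  have hmono : ∀ {i j : ι}, S i ≤ S j → T i ≤ T j := by
    intro i j h
    have he : (S i).arrow ≫ g = Subobject.ofLE _ _ h ≫ ((S j).arrow ≫ g) := by
      rw [← Category.assoc, Subobject.ofLE_arrow]
    show imageSubobject ((S i).arrow ≫ g) ≤ imageSubobject ((S j).arrow ≫ g)
    rw [he]
    exact imageSubobject_comp_le _ _
  have hTfil : KappaFilteredFamily κ T := by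
    intro t ht
    obtain ⟨j, hj⟩ := hfil t ht
    exact ⟨j, fun i hi => hmono (hj i hi)⟩
  have hTsup : iSup T = ⊤ := by
    set q := cokernel.π (iSup T).arrow with hq
    have h0 : ∀ i, (S i).arrow ≫ (g ≫ q) = 0 := by
      intro i
      have h1 : (T i).arrow ≫ q = 0 := by
        have hle : T i ≤ iSup T := le_sSup (Set.mem_range_self i)
        rw [← Subobject.ofLE_arrow hle, Category.assoc, hq,
          cokernel.condition, comp_zero]
      calc (S i).arrow ≫ (g ≫ q)
          = (factorThruImageSubobject ((S i).arrow ≫ g) ≫ (T i).arrow) ≫ q := by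
            rw [imageSubobject_arrow_comp, Category.assoc]
        _ = 0 := by rw [Category.assoc, h1, comp_zero]
    have hker : kernelSubobject (g ≫ q) = ⊤ := by
      have hle : iSup S ≤ kernelSubobject (g ≫ q) := by
        apply sSup_le
        rintro b ⟨i, rfl⟩
        exact le_kernelSubobject _ _ (h0 i)
      exact le_antisymm le_top (hsup ▸ hle)
    have hgq : g ≫ q = 0 := by
      have := kernelSubobject_arrow_comp (g ≫ q)
      have hiso : IsIso (kernelSubobject (g ≫ q)).arrow :=
        (Subobject.isIso_arrow_iff_eq_top _).mpr hker
      exact zero_of_epi_comp (kernelSubobject (g ≫ q)).arrow this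
    have hq0 : q = 0 := by
      rw [← cancel_epi g, hgq, comp_zero]
    have : Epi (iSup T).arrow := Abelian.epi_of_cokernel_π_eq_zero _ hq0
    have : IsIso (iSup T).arrow := isIso_of_mono_of_epi _
    exact (Subobject.isIso_arrow_iff_eq_top _).mp this
  obtain ⟨i, hi⟩ := hY T hTfil hTsup
  refine ⟨S i, hgen i, ?_⟩
  have hiso : IsIso (T i).arrow := (Subobject.isIso_arrow_iff_eq_top _).mpr hi
  rw [← imageSubobject_arrow_comp ((S i).arrow ≫ g)]
  exact epi_comp _ _
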